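/- Let (x_i) be a real sequence with x_i ≠ ξ for all i, satisfying x_{i+1} - ξ = (k_0 + δ_i)(x_i - ξ) where δ_i → 0, |k_0| < 1, and k_0 ≠ 1. Then the Aitken-transformed sequence x_i' = x_i - (x_{i+1} - x_i)^2/(x_{i+2} - 2x_{i+1} + x_i) satisfies (x_i' - ξ)/(x_i - ξ) → 0 as i → ∞. -/
import Mathlib


open Filter Topology

theorem aitken_accelerates (x : ℕ → ℝ) (ξ k₀ : ℝ) (δ : ℕ → ℝ)
    (hx : ∀ i, x i ≠ ξ)
    (hrec : ∀ i, x (i + 1) - ξ = (k₀ + δ i) * (x i - ξ))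
    (hδ : Tendsto δ atTop (𝓝 0)) (hk : |k₀| < 1) (hk1 : k₀ ≠ 1) :
    Tendsto (fun i =>
      ((x i - (x (i + 1) - x i) ^ 2 / (x (i + 2) - 2 * x (i + 1) + x i)) - ξ) /
        (x i - ξ)) atTop (𝓝 0) := by
  set c : ℕ → ℝ := fun i => (k₀ + δ (i + 1)) * (k₀ + δ i) - 2 * (k₀ + δ i) + 1 with hc
  have hδ1 : Tendsto (fun i => δ (i + 1)) atTop (𝓝 0) :=
    hδ.comp (tendsto_add_atTop_nat 1)
  have hctend : Tendsto c atTop (𝓝 ((k₀ - 1) ^ 2)) := by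
    have : Tendsto c atTop (𝓝 ((k₀ + 0) * (k₀ + 0) - 2 * (k₀ + 0) + 1)) := by
      exact (((tendsto_const_nhds.add hδ1).mul (tendsto_const_nhds.add hδ)).sub
        (tendsto_const_nhds.mul (tendsto_const_nhds.add hδ))).add tendsto_const_nhds
    convert this using 2
    ring
  have hk0 : (k₀ - 1) ^ 2 ≠ 0 := pow_ne_zero _ (sub_ne_zero.mpr hk1)
  have hcev : ∀ᶠ i in atTop, c i ≠ 0 := hctend.eventually_ne hk0
  have hf : Tendsto (fun i => 1 - (k₀ + δ i - 1) ^ 2 / c i) atTop (𝓝 0) := by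
    have hnum : Tendsto (fun i => (k₀ + δ i - 1) ^ 2) atTop (𝓝 ((k₀ - 1) ^ 2)) := by
      have : Tendsto (fun i => k₀ + δ i - 1) atTop (𝓝 (k₀ + 0 - 1)) :=
        (tendsto_const_nhds.add hδ).sub tendsto_const_nhds
      rw [add_zero] at this
      exact this.pow 2
    have := (tendsto_const_nhds : Tendsto (fun _ : ℕ => (1:ℝ)) atTop (𝓝 1)).sub (hnum.div hctend hk0)
    simpa [div_self hk0] using this
  refine hf.congr' ?_
  filter_upwards [hcev] with i hci
  have he : x i - ξ ≠ 0 := sub_ne_zero.mpr (hx i)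
  have h1 : x (i + 1) - x i = (k₀ + δ i - 1) * (x i - ξ) := by
    have := hrec i; ring_nf; ring_nf at this; linarith
  have h2 : x (i + 2) - 2 * x (i + 1) + x i = c i * (x i - ξ) := by
    have ha := hrec i
    have hb := hrec (i + 1)
    rw [ha] at hb
    simp only [hc]
    ring_nf; ring_nf at hb ha; linarith
  rw [h1, h2]
  field_simp
  ring
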